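/- Let L be a regular language with n distinct quotients K₀,…,K_{n−1}, and let A = K₀ ∩ ⋯ ∩ K_{n−1} be its atom with zero complemented quotients. Then for every word w, the quotient w⁻¹A is an intersection of a non-empty subset of {K₀,…,K_{n−1}}; consequently A has at most 2^n − 1 distinct quotients. -/
import Mathlib


def leftQuot {α : Type*} (w : List α) (L : Set (List α)) : Set (List α) := {x | w ++ x ∈ L}

theorem atom_no_complement_bound {α : Type*} (L : Set (List α)) (n : ℕ) (hn : 1 ≤ n)
    (K : Fin n → Set (List α))
    (hInj : Function.Injective K)
    (hquot : ∀ i, ∃ w, K i = leftQuot w L)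
    (hall : ∀ w : List α, ∃ i, leftQuot w L = K i)
    (hclosed : ∀ (w : List α) (i : Fin n), ∃ j, leftQuot w (K i) = K j)
    (A : Set (List α)) (hA : A = ⋂ i, K i) :
    (∀ w : List α, ∃ T : Finset (Fin n), T.Nonempty ∧ leftQuot w A = ⋂ i ∈ T, K i) ∧
      {M : Set (List α) | ∃ w : List α, M = leftQuot w A}.Finite ∧
      {M : Set (List α) | ∃ w : List α, M = leftQuot w A}.ncard ≤ 2 ^ n - 1 := by
  haveI : NeZero n := ⟨by omega⟩
  have key : ∀ w : List α, ∃ T : Finset (Fin n), T.Nonempty ∧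
      leftQuot w A = ⋂ i ∈ T, K i := by
    intro w
    choose j hj using hclosed w
    refine ⟨Finset.univ.image j, ⟨j 0, Finset.mem_image_of_mem j (Finset.mem_univ 0)⟩, ?_⟩
    ext x
    simp only [hA, leftQuot, Set.mem_setOf_eq, Set.mem_iInter, Finset.mem_image,
      Finset.mem_univ, true_and]
    constructor
    · rintro h i ⟨k, rfl⟩
      have := hj k
      have hx : x ∈ leftQuot w (K k) := h k
      rwa [this] at hx
    · intro h k
      have hx : x ∈ K (j k) := h (j k) ⟨k, rfl⟩
      have := hj k
      have : x ∈ leftQuot w (K k) := by rw [this]; exact hx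
      exact this
  refine ⟨key, ?_, ?_⟩
  · apply Set.Finite.subset (Set.finite_range (fun T : Finset (Fin n) => ⋂ i ∈ T, K i))
    rintro M ⟨w, rfl⟩
    obtain ⟨T, _, hT⟩ := key w
    exact ⟨T, hT.symm⟩
  · have hsub : {M : Set (List α) | ∃ w : List α, M = leftQuot w A} ⊆
        (fun T : Finset (Fin n) => ⋂ i ∈ T, K i) '' {T | T.Nonempty} := by
      rintro M ⟨w, rfl⟩
      obtain ⟨T, hTne, hT⟩ := key w
      exact ⟨T, hTne, hT.symm⟩
    have hfin : ((fun T : Finset (Fin n) => ⋂ i ∈ T, K i) '' {T | T.Nonempty}).Finite :=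
      (Set.toFinite _).image _
    calc {M : Set (List α) | ∃ w : List α, M = leftQuot w A}.ncard
        ≤ ((fun T : Finset (Fin n) => ⋂ i ∈ T, K i) '' {T | T.Nonempty}).ncard :=
          Set.ncard_le_ncard hsub hfin
      _ ≤ {T : Finset (Fin n) | T.Nonempty}.ncard := Set.ncard_image_le (Set.toFinite _)
      _ ≤ 2 ^ n - 1 := by
          have h1 : {T : Finset (Fin n) | T.Nonempty} = Set.univ \ {∅} := by
            ext T
            simp [Finset.nonempty_iff_ne_empty]
          rw [h1, Set.ncard_diff_singleton_of_mem (Set.mem_univ _), Set.ncard_univ,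
            Nat.card_eq_fintype_card, Fintype.card_finset, Fintype.card_fin]
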